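/- arXiv:2206.07141 — 2 statements merged into one kernel-verified Lean document; each statement's English description precedes it below -/
import Mathlib

section
/- Let G be a Hausdorff topological group, A an open subgroup of G, and B, C subgroups of A that are open in G, with B ∩ C containing a compact open subgroup of G. Let t ∈ G be such that conjugation c ↦ t⁻¹ c t restricts to an isomorphism α : C → B, and suppose the canonical homomorphism from the HNN extension A∗_α = ⟨A, s ∣ s⁻¹ c s = α(c) for c ∈ C⟩ to G, which restricts to the inclusion on A and sends the stable letter s to t, is bijective. If G and C are compactly generated, then A (with the subspace topology) is compactly generated. -/
open MulAction

universe u v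

/-- A topological group is compactly generated if it has a compact subset that
generates it algebraically. -/
def IsCompactlyGeneratedGroup (G : Type*) [Group G] [TopologicalSpace G] : Prop :=
  ∃ S : Set G, IsCompact S ∧ Subgroup.closure S = ⊤

/-- A topological group `G` is compactly presented if there are a compact generating set `S`
and `n : ℕ` such that the kernel of the canonical map `FreeGroup S →* G` is generated as a
normal subgroup by its elements of word length at most `n`. -/
def IsCompactlyPresentedGroup (G : Type*) [Group G] [TopologicalSpace G] : Prop :=
  ∃ (S : Set G) (n : ℕ), IsCompact S ∧ Subgroup.closure S = ⊤ ∧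
    Subgroup.normalClosure
      {x : FreeGroup S |
        x ∈ (FreeGroup.lift (fun s : S => (s : G))).ker ∧
          ∃ l : List (S × Bool), FreeGroup.mk l = x ∧ l.length ≤ n} =
      (FreeGroup.lift (fun s : S => (s : G))).ker

/-- A topological group is coherent if every closed compactly generated subgroup
(with the subspace topology) is compactly presented. -/
def IsCoherentGroup (G : Type*) [Group G] [TopologicalSpace G] : Prop :=
  ∀ Q : Subgroup G, IsClosed (Q : Set G) → IsCompactlyGeneratedGroup Q →
    IsCompactlyPresentedGroup Q

section Amalgam

variable {G : Type u} [Group G]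

/-- The two-element family of groups `A`, `B`. -/
def amalgamFamily (A B : Subgroup G) : Bool → Type u := fun b => match b with
  | true => A
  | false => B

instance (A B : Subgroup G) : (b : Bool) → Group (amalgamFamily A B b)
  | true => inferInstanceAs (Group A)
  | false => inferInstanceAs (Group B)

/-- The inclusions of `C = A ⊓ B` into `A` and `B`. -/
def amalgamMaps (A B : Subgroup G) : (b : Bool) → (↥(A ⊓ B) →* amalgamFamily A B b)
  | true => Subgroup.inclusion inf_le_left
  | false => Subgroup.inclusion inf_le_right

/-- The inclusions of `A` and `B` into `G`. -/
def amalgamProj (A B : Subgroup G) : (b : Bool) → (amalgamFamily A B b →* G)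
  | true => A.subtype
  | false => B.subtype

/-- The canonical homomorphism from the pushout (in the category of groups) of the
inclusions `A ⊓ B ↪ A` and `A ⊓ B ↪ B` to `G`. -/
def amalgamCanonicalHom (A B : Subgroup G) : Monoid.PushoutI (amalgamMaps A B) →* G :=
  Monoid.PushoutI.lift (amalgamProj A B) (A ⊓ B).subtype
    (by rintro (_ | _) <;> exact MonoidHom.ext fun x => rfl)

/-- `G` splits as the amalgamated free product `A ∗_(A ⊓ B) B` if the canonical homomorphism
from the pushout of the inclusions to `G` is bijective. -/
def IsAmalgamatedProduct (A B : Subgroup G) : Prop :=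
  Function.Bijective (amalgamCanonicalHom A B)

end Amalgam

section Graphs

variable {V : Type v}

/-- The graph obtained from `Γ` by deleting the vertex `v` (making it isolated). -/
def SimpleGraph.deleteVertex (Γ : SimpleGraph V) (v : V) : SimpleGraph V where
  Adj a b := Γ.Adj a b ∧ a ≠ v ∧ b ≠ v
  symm := ⟨fun a b h => ⟨h.1.symm, h.2.2, h.2.1⟩⟩
  loopless := ⟨fun a h => Γ.loopless.irrefl a h.1⟩

/-- `Γ` is fine at `v` if for every neighbour `x` of `v` and every `n`, there are only
finitely many neighbours of `v` joined to `x` by a path of length at most `n` avoiding `v`;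
i.e. balls of the angle metric on the neighbours of `v` are finite. -/
def SimpleGraph.FineAt (Γ : SimpleGraph V) (v : V) : Prop :=
  ∀ x ∈ Γ.neighborSet v, ∀ n : ℕ,
    {y | y ∈ Γ.neighborSet v ∧ ∃ p : (Γ.deleteVertex v).Walk x y, p.length ≤ n}.Finite

/-- A graph is fine if it is fine at every vertex. -/
def SimpleGraph.Fine (Γ : SimpleGraph V) : Prop := ∀ v : V, Γ.FineAt v

/-- A connected graph is hyperbolic if its path metric satisfies the four point condition
up to an additive constant. -/
def SimpleGraph.IsHyperbolic (Γ : SimpleGraph V) : Prop :=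
  ∃ δ : ℝ, 0 ≤ δ ∧ ∀ x y z w : V,
    (Γ.dist x y + Γ.dist z w : ℝ) ≤
      max ((Γ.dist x z + Γ.dist y w : ℝ)) ((Γ.dist x w + Γ.dist y z : ℝ)) + δ

/-- Two graphs (with their path metrics) are quasi-isometric. -/
def QuasiIsometricGraphs {V₁ : Type*} {V₂ : Type*}
    (Γ₁ : SimpleGraph V₁) (Γ₂ : SimpleGraph V₂) : Prop :=
  ∃ (f : V₁ → V₂) (L C : ℝ), 1 ≤ L ∧ 0 ≤ C ∧
    (∀ x y : V₁,
      L⁻¹ * (Γ₁.dist x y : ℝ) - C ≤ (Γ₂.dist (f x) (f y) : ℝ) ∧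
      (Γ₂.dist (f x) (f y) : ℝ) ≤ L * (Γ₁.dist x y : ℝ) + C) ∧
    ∀ z : V₂, ∃ x : V₁, (Γ₂.dist z (f x) : ℝ) ≤ C

end Graphs

section GGraphs

variable (G : Type u) [Group G] [TopologicalSpace G] {V : Type v} [MulAction G V]

/-- The action of `G` on the vertices of `Γ` is by graph automorphisms. -/
def IsGraphAction (Γ : SimpleGraph V) : Prop :=
  ∀ (g : G) (a b : V), Γ.Adj a b → Γ.Adj (g • a) (g • b)

/-- The action is discrete: all vertex stabilizers are open. -/
def IsDiscreteAction (Γ : SimpleGraph V) : Prop :=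
  ∀ v : V, IsOpen ((stabilizer G v : Subgroup G) : Set G)

/-- The action is cocompact: finitely many orbits of vertices and of edges. -/
def IsCocompactAction (Γ : SimpleGraph V) : Prop :=
  (∃ s : Set V, s.Finite ∧ ∀ v : V, ∃ g : G, g • v ∈ s) ∧
  (∃ t : Set (V × V), t.Finite ∧ ∀ a b : V, Γ.Adj a b → ∃ g : G, (g • a, g • b) ∈ t)

/-- Pointwise edge stabilizers are compact. -/
def HasCompactEdgeStabilizers (Γ : SimpleGraph V) : Prop :=
  ∀ a b : V, Γ.Adj a b →
    IsCompact ((stabilizer G a ⊓ stabilizer G b : Subgroup G) : Set G)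

/-- The conjugate `g H g⁻¹` of a subgroup. -/
def conjSubgroup {G : Type u} [Group G] (g : G) (H : Subgroup G) : Subgroup G :=
  Subgroup.map (MulAut.conj g).toMonoidHom H

/-- A proper pair: `G` has a compact open subgroup, `ℋ` is a finite collection of open
subgroups, and no two distinct non-compact members of `ℋ` are conjugate. -/
def IsProperPair (G : Type u) [Group G] [TopologicalSpace G]
    (ℋ : Finset (Subgroup G)) : Prop :=
  (∃ U : Subgroup G, IsCompact (U : Set G) ∧ IsOpen (U : Set G)) ∧
  (∀ H ∈ ℋ, IsOpen ((H : Subgroup G) : Set G)) ∧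
  (∀ H ∈ ℋ, ∀ K ∈ ℋ, ¬ IsCompact ((H : Subgroup G) : Set G) →
    ¬ IsCompact ((K : Subgroup G) : Set G) →
    (∃ g : G, conjSubgroup g H = K) → H = K)

/-- `Γ` is a Cayley-Abels graph of `G` with respect to `ℋ`. -/
def IsCayleyAbelsGraph (ℋ : Finset (Subgroup G)) (Γ : SimpleGraph V) : Prop :=
  IsGraphAction G Γ ∧
  Γ.Connected ∧
  IsDiscreteAction G Γ ∧
  IsCocompactAction G Γ ∧
  HasCompactEdgeStabilizers G Γ ∧
  (∀ v : V, IsCompact ((stabilizer G v : Subgroup G) : Set G) ∨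
    ∃ H ∈ ℋ, ∃ g : G, stabilizer G v = conjSubgroup g H) ∧
  (∀ H ∈ ℋ, ∃ v : V, stabilizer G v = H) ∧
  (∀ H ∈ ℋ, ¬ IsCompact ((H : Subgroup G) : Set G) →
    ∀ u v : V, stabilizer G u = H → stabilizer G v = H → ∃ g : G, g • u = v)

end GGraphs

/-- The canonical homomorphism from the HNN extension `⟨A, s ∣ s⁻¹ c s = α(c), c ∈ C⟩`
to `G`, restricting to the inclusion on `A` and sending the stable letter to `t`.
(In Mathlib's `HNNExtension`, the stable letter `HNNExtension.t` satisfies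
`t·c·t⁻¹ = α c`, so it corresponds to `s⁻¹` and is sent to `t⁻¹`.) -/
def hnnCanonicalHom {G : Type u} [Group G] (A : Subgroup G) (C B : Subgroup ↥A)
    (α : ↥C ≃* ↥B) (t : G)
    (hα : ∀ c : C, ((α c : ↥A) : G) = t⁻¹ * ((c : ↥A) : G) * t) :
    HNNExtension ↥A C B α →* G :=
  HNNExtension.lift A.subtype t⁻¹ (by
    intro c
    have h := hα c
    simp only [Subgroup.coe_subtype]
    rw [h]
    group)


section CoreHNN

open HNNExtension HNNExtension.NormalWord

variable {K : Type*} [Group K] {A B : Subgroup K} {φ : A ≃* B}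

private theorem mem_of_mem_toSubgroup {E : Subgroup K}
    (hA : (A : Set K) ⊆ E) (hB : (B : Set K) ⊆ E) (u : ℤˣ)
    {x : K} (hx : x ∈ toSubgroup A B u) : x ∈ E := by
  rcases Int.units_eq_one_or u with rfl | rfl
  · exact hA hx
  · exact hB hx

private theorem of_toSubgroupEquiv_eq (u : ℤˣ) (x : toSubgroup A B u) :
    (of (toSubgroupEquiv φ u x : K) : HNNExtension K A B φ) =
      t ^ (u : ℤ) * of (x : K) * (t ^ (u : ℤ))⁻¹ := by
  rcases Int.units_eq_one_or u with rfl | rfl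
  · have hc := equiv_eq_conj (φ := φ) x
    simp at hc ⊢
    exact hc
  · have hc := equiv_symm_eq_conj (φ := φ) x
    simp at hc ⊢
    exact hc

private theorem exists_reduced_prepend_t {E : Subgroup K}
    (hA : (A : Set K) ⊆ E) (hB : (B : Set K) ⊆ E)
    (w : ReducedWord K A B) (hw1 : w.head ∈ E) (hw2 : ∀ p ∈ w.toList, p.2 ∈ E) (u : ℤˣ) :
    ∃ w' : ReducedWord K A B, w'.head ∈ E ∧ (∀ p ∈ w'.toList, p.2 ∈ E) ∧
      w'.prod φ = t ^ (u : ℤ) * w.prod φ := by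
  rcases w with ⟨h, L, ch⟩
  simp only at hw1 hw2 ⊢
  match L, ch, hw2 with
  | [], _, hw2 =>
      refine ⟨⟨1, [(u, h)], List.isChain_singleton _⟩, one_mem _, ?_, ?_⟩
      · intro p hp
        rcases List.mem_singleton.1 hp with rfl
        exact hw1
      · simp [ReducedWord.prod, mul_assoc]
  | (u₂, g₂) :: L', ch, hw2 =>
      by_cases hmem : h ∈ toSubgroup A B u
      · by_cases hu : u₂ = u
        · subst hu
          refine ⟨⟨1, (u₂, h) :: (u₂, g₂) :: L', List.isChain_cons_cons.2 ⟨fun _ => rfl, ch⟩⟩,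
            one_mem _, ?_, ?_⟩
          · intro p hp
            rcases List.mem_cons.1 hp with rfl | hp
            · exact hw1
            · exact hw2 p hp
          · simp [ReducedWord.prod, mul_assoc]
        · have hu₂ : u₂ = -u := by
            rcases Int.units_eq_one_or u with rfl | rfl <;>
              rcases Int.units_eq_one_or u₂ with rfl | rfl <;> simp_all
          subst hu₂
          refine ⟨⟨(toSubgroupEquiv φ u ⟨h, hmem⟩ : K) * g₂, L',
            (List.isChain_cons.1 ch).2⟩, ?_, ?_, ?_⟩
          · exact mul_mem
              (mem_of_mem_toSubgroup hA hB (-u) (toSubgroupEquiv φ u ⟨h, hmem⟩).2)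
              (hw2 (-u, g₂) List.mem_cons_self)
          · intro p hp
            exact hw2 p (List.mem_cons_of_mem _ hp)
          · have hc := of_toSubgroupEquiv_eq (φ := φ) u ⟨h, hmem⟩
            simp only [ReducedWord.prod, List.map_cons, List.prod_cons, map_mul, hc,
              Units.val_neg, zpow_neg]
            group
      · refine ⟨⟨1, (u, h) :: (u₂, g₂) :: L',
          List.isChain_cons_cons.2 ⟨fun hm => absurd hm hmem, ch⟩⟩, one_mem _, ?_, ?_⟩
        · intro p hp
          rcases List.mem_cons.1 hp with rfl | hp
          · exact hw1
          · exact hw2 p hp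
        · simp [ReducedWord.prod, mul_assoc]

private theorem exists_reduced_of_mem_closure {E : Subgroup K}
    (hA : (A : Set K) ⊆ E) (hB : (B : Set K) ⊆ E)
    {x : HNNExtension K A B φ}
    (hx : x ∈ Subgroup.closure (of '' (E : Set K) ∪ {(t : HNNExtension K A B φ)})) :
    ∃ w : ReducedWord K A B, w.head ∈ E ∧ (∀ p ∈ w.toList, p.2 ∈ E) ∧ w.prod φ = x := by
  induction hx using Subgroup.closure_induction_left with
  | one =>
      exact ⟨ReducedWord.empty K A B, one_mem _, by simp [ReducedWord.empty],
        by simp [ReducedWord.prod, ReducedWord.empty]⟩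
  | mul_left x hx y hy ih =>
      obtain ⟨w, h1, h2, h3⟩ := ih
      rcases hx with ⟨g, hg, rfl⟩ | rfl
      · refine ⟨⟨g * w.head, w.toList, w.chain⟩, mul_mem hg h1, h2, ?_⟩
        rw [← h3]
        simp [ReducedWord.prod, mul_assoc]
      · obtain ⟨w', h1', h2', h3'⟩ := exists_reduced_prepend_t hA hB w h1 h2 1
        exact ⟨w', h1', h2', by rw [h3', h3]; simp⟩
  | inv_mul_cancel x hx y hy ih =>
      obtain ⟨w, h1, h2, h3⟩ := ih
      rcases hx with ⟨g, hg, rfl⟩ | rfl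
      · refine ⟨⟨g⁻¹ * w.head, w.toList, w.chain⟩, mul_mem (inv_mem hg) h1, h2, ?_⟩
        rw [← h3]
        simp [ReducedWord.prod, mul_assoc]
      · obtain ⟨w', h1', h2', h3'⟩ := exists_reduced_prepend_t hA hB w h1 h2 (-1)
        exact ⟨w', h1', h2', by rw [h3', h3]; simp⟩

theorem hnn_base_eq_top {E : Subgroup K}
    (hA : (A : Set K) ⊆ E) (hB : (B : Set K) ⊆ E)
    (htop : Subgroup.closure (of '' (E : Set K) ∪ {(t : HNNExtension K A B φ)}) = ⊤) :
    E = ⊤ := by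
  refine (Subgroup.eq_top_iff' E).2 fun g => ?_
  have hg : (of g : HNNExtension K A B φ) ∈
      Subgroup.closure (of '' (E : Set K) ∪ {(t : HNNExtension K A B φ)}) := by
    rw [htop]; exact Subgroup.mem_top _
  obtain ⟨w, h1, h2, h3⟩ := exists_reduced_of_mem_closure hA hB hg
  have hnil : w.toList = [] :=
    HNNExtension.ReducedWord.toList_eq_nil_of_mem_of_range φ w (by rw [h3]; exact ⟨g, rfl⟩)
  have hp : w.prod φ = of w.head := by
    simp [ReducedWord.prod, hnil]
  have : w.head = g := of_injective (φ := φ) (by rw [← hp, h3])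
  exact this ▸ h1

private theorem exists_finite_support (x : HNNExtension K A B φ) :
    ∃ X : Set K, X.Finite ∧
      x ∈ Subgroup.closure (of '' X ∪ {(t : HNNExtension K A B φ)}) := by
  induction x using HNNExtension.induction_on with
  | of g =>
      exact ⟨{g}, Set.finite_singleton _,
        Subgroup.subset_closure (Or.inl ⟨g, rfl, rfl⟩)⟩
  | t => exact ⟨∅, Set.finite_empty, Subgroup.subset_closure (Or.inr rfl)⟩
  | mul x y hx hy =>
      obtain ⟨X, hXf, hX⟩ := hx
      obtain ⟨Y, hYf, hY⟩ := hy
      refine ⟨X ∪ Y, hXf.union hYf, mul_mem ?_ ?_⟩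
      · exact Subgroup.closure_mono (Set.union_subset_union_left _
          (Set.image_mono Set.subset_union_left)) hX
      · exact Subgroup.closure_mono (Set.union_subset_union_left _
          (Set.image_mono Set.subset_union_right)) hY
  | inv x hx =>
      obtain ⟨X, hXf, hX⟩ := hx
      exact ⟨X, hXf, inv_mem hX⟩

end CoreHNN

/-- If `G` is an HNN extension of an open subgroup `A` over subgroups `B`, `C` of `A`
which are open in `G`, with `B ⊓ C` containing a compact open subgroup of `G`, the stable
letter acting by conjugation by `t`, and `G` and `C` are compactly generated, then `A` is
compactly generated. -/
theorem isCompactlyGenerated_base_of_hnn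
    {G : Type u} [Group G] [TopologicalSpace G] [IsTopologicalGroup G] [T2Space G]
    (A : Subgroup G) (hAopen : IsOpen (A : Set G))
    (C B : Subgroup ↥A)
    (hCopen : IsOpen (A.subtype '' (C : Set ↥A)))
    (hBopen : IsOpen (A.subtype '' (B : Set ↥A)))
    (hU : ∃ U : Subgroup G, IsCompact (U : Set G) ∧ IsOpen (U : Set G) ∧
      (U : Set G) ⊆ A.subtype '' ((B ⊓ C : Subgroup ↥A) : Set ↥A))
    (t : G) (α : ↥C ≃* ↥B)
    (hα : ∀ c : C, ((α c : ↥A) : G) = t⁻¹ * ((c : ↥A) : G) * t)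
    (hsplit : Function.Bijective (hnnCanonicalHom A C B α t hα))
    (hG : IsCompactlyGeneratedGroup G) (hC : IsCompactlyGeneratedGroup ↥C) :
    IsCompactlyGeneratedGroup ↥A := by
  classical
  obtain ⟨S, hScomp, hStop⟩ := hG
  obtain ⟨U, hUcomp, hUopen, hUsub⟩ := hU
  obtain ⟨Q, hQcomp, hQtop⟩ := hC
  let e : HNNExtension ↥A C B α ≃* G :=
    MulEquiv.ofBijective (hnnCanonicalHom A C B α t hα) hsplit
  have heof : ∀ a : ↥A, e (HNNExtension.of a) = (a : G) := fun a => by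
    simp [e, MulEquiv.ofBijective, hnnCanonicalHom]
  have hUA : ∀ u ∈ U, u ∈ A := fun u hu => by
    obtain ⟨a, _, rfl⟩ := hUsub hu; exact a.2
  -- cover S by finitely many left cosets of U
  obtain ⟨F, hF⟩ := hScomp.elim_finite_subcover
    (fun s : S => (fun x => (s : G) * x) '' (U : Set G))
    (fun s => (Homeomorph.mulLeft (s : G)).isOpenMap _ hUopen)
    (fun s hs => Set.mem_iUnion.2 ⟨⟨s, hs⟩, ⟨1, one_mem U, mul_one s⟩⟩)
  set F' : Set G := Subtype.val '' (F : Set S) with hF'def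
  have hF'fin : F'.Finite := F.finite_toSet.image _
  have hGgen : Subgroup.closure (F' ∪ (U : Set G)) = ⊤ := by
    rw [← top_le_iff, ← hStop]
    refine Subgroup.closure_le _ |>.2 fun s hs => ?_
    obtain ⟨i, hi⟩ := Set.mem_iUnion.1 (hF hs)
    obtain ⟨hiF, u, hu, heq⟩ := Set.mem_iUnion.1 hi
    have h1 : (i : G) ∈ Subgroup.closure (F' ∪ (U : Set G)) :=
      Subgroup.subset_closure (Or.inl ⟨i, hiF, rfl⟩)
    have h2 : u ∈ Subgroup.closure (F' ∪ (U : Set G)) :=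
      Subgroup.subset_closure (Or.inr hu)
    exact heq ▸ mul_mem h1 h2
  -- finite supports for the images of F'
  choose X hXfin hXmem using fun h : HNNExtension ↥A C B α => exists_finite_support h
  set XF : Set ↥A := ⋃ f ∈ F', X (e.symm f) with hXFdef
  have hXFfin : XF.Finite := hF'fin.biUnion fun f _ => hXfin _
  set UA : Set ↥A := Subtype.val ⁻¹' (U : Set G) with hUAdef
  set Q₁ : Set ↥A := C.subtype '' Q with hQ₁def
  set Q₂ : Set ↥A := B.subtype '' (⇑α '' Q) with hQ₂def
  set gens : Set ↥A := XF ∪ UA ∪ Q₁ ∪ Q₂ with hgensdef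
  have hQ₁g : Q₁ ⊆ gens := (Set.subset_union_right).trans Set.subset_union_left
  have hQ₂g : Q₂ ⊆ gens := Set.subset_union_right
  have hXFg : XF ⊆ gens :=
    (Set.subset_union_left.trans Set.subset_union_left).trans Set.subset_union_left
  have hUAg : UA ⊆ gens :=
    (Set.subset_union_right.trans Set.subset_union_left).trans Set.subset_union_left
  have hCE : (C : Set ↥A) ⊆ (Subgroup.closure gens : Subgroup ↥A) := by
    intro c hc
    have h1 : (⟨c, hc⟩ : ↥C) ∈ Subgroup.closure Q := hQtop ▸ Subgroup.mem_top _
    have h2 := Subgroup.mem_map_of_mem C.subtype h1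
    rw [MonoidHom.map_closure] at h2
    exact SetLike.mem_coe.2 (Subgroup.closure_mono hQ₁g h2)
  have hBE : (B : Set ↥A) ⊆ (Subgroup.closure gens : Subgroup ↥A) := by
    intro b hb
    have h0 : (α.symm ⟨b, hb⟩) ∈ Subgroup.closure Q := hQtop ▸ Subgroup.mem_top _
    have h1 : (⟨b, hb⟩ : ↥B) ∈ Subgroup.closure (⇑α '' Q) := by
      have := Subgroup.mem_map_of_mem α.toMonoidHom h0
      rw [MonoidHom.map_closure] at this
      simpa using this
    have h2 := Subgroup.mem_map_of_mem B.subtype h1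
    rw [MonoidHom.map_closure] at h2
    exact SetLike.mem_coe.2 (Subgroup.closure_mono hQ₂g h2)
  -- the transferred generating set of the HNN extension
  have hHgen : Subgroup.closure
      (HNNExtension.of '' ((Subgroup.closure gens : Subgroup ↥A) : Set ↥A) ∪
        {(HNNExtension.t : HNNExtension ↥A C B α)}) = ⊤ := by
    have h2 : Subgroup.closure (⇑e.symm '' (F' ∪ (U : Set G))) = ⊤ := by
      have h3 := MonoidHom.map_closure e.symm.toMonoidHom (F' ∪ (U : Set G))
      rw [hGgen, Subgroup.map_top_of_surjective _ e.symm.surjective] at h3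
      exact h3.symm
    rw [← top_le_iff, ← h2]
    refine Subgroup.closure_le _ |>.2 ?_
    rintro x ⟨y, hy, rfl⟩
    rcases hy with hy | hy
    · refine SetLike.mem_coe.2 (Subgroup.closure_mono ?_ (hXmem (e.symm y)))
      refine Set.union_subset_union_left _ (Set.image_mono ?_)
      intro a ha
      exact Subgroup.subset_closure (hXFg (Set.mem_biUnion hy ha))
    · have hyA : y ∈ A := hUA y hy
      have hey : e.symm y = HNNExtension.of (⟨y, hyA⟩ : ↥A) := by
        rw [MulEquiv.symm_apply_eq, heof]
      rw [hey]
      exact SetLike.mem_coe.2 (Subgroup.subset_closure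
        (Or.inl ⟨⟨y, hyA⟩, Subgroup.subset_closure (hUAg hy), rfl⟩))
  have hEtop : Subgroup.closure gens = ⊤ := hnn_base_eq_top hCE hBE hHgen
  -- compactness
  have hval : Topology.IsEmbedding (Subtype.val : ↥A → G) := Topology.IsEmbedding.subtypeVal
  have hUAcomp : IsCompact UA := by
    rw [hval.isCompact_iff]
    have : Subtype.val '' UA = (U : Set G) := by
      rw [hUAdef, Set.image_preimage_eq_inter_range, Subtype.range_val]
      exact Set.inter_eq_left.2 fun u hu => hUA u hu
    rw [this]
    exact hUcomp
  have hQ₁comp : IsCompact Q₁ := by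
    rw [hQ₁def, Subgroup.coe_subtype]
    exact hQcomp.image continuous_subtype_val
  have hQ₂comp : IsCompact Q₂ := by
    rw [hval.isCompact_iff]
    have himg : Subtype.val '' Q₂ = (fun g => t⁻¹ * g * t) '' (Subtype.val '' (Subtype.val '' Q)) := by
      rw [hQ₂def, Subgroup.coe_subtype, Set.image_image, Set.image_image, Set.image_image,
        Set.image_image]
      exact Set.image_congr fun c _ => hα c
    rw [himg]
    exact (((hQcomp.image continuous_subtype_val).image continuous_subtype_val).image
      ((continuous_mul_left t⁻¹).mul continuous_const))
  exact ⟨gens, ((hXFfin.isCompact.union hUAcomp).union hQ₁comp).union hQ₂comp, hEtop⟩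
end

section
/- Let G be a Hausdorff topological group with open subgroups A and B such that C = A ∩ B is compact and G splits as the amalgamated free product A ∗_C B. If A and B (with the subspace topology) are compactly presented, then G is compactly presented. -/
open MulAction

universe u v

open Pointwise

namespace CPAux

variable {H : Type u} [Group H]

/-- symmetrized alphabet -/
def sym (T : Set H) : Set H := T ∪ T⁻¹ ∪ {1}

lemma subset_sym (T : Set H) : T ⊆ sym T := fun x hx => Or.inl (Or.inl hx)

lemma one_mem_sym (T : Set H) : (1 : H) ∈ sym T := Or.inr rfl

lemma sym_inv (T : Set H) : (sym T)⁻¹ = sym T := by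
  ext x
  simp only [sym, Set.mem_inv, Set.mem_union, Set.mem_singleton_iff, inv_eq_one,
    inv_inv]
  tauto

lemma pow_mono {T : Set H} {a b : ℕ} (h : a ≤ b) : sym T ^ a ⊆ sym T ^ b :=
  Set.pow_subset_pow_right (one_mem_sym T) h

lemma pow_inv (T : Set H) (m : ℕ) : (sym T ^ m)⁻¹ = sym T ^ m := by
  rw [← inv_pow, sym_inv]

lemma mem_iUnion_pow {T : Set H} (hT : Subgroup.closure T = ⊤) (h : H) :
    ∃ m, h ∈ sym T ^ m := by
  let W : Subgroup H :=
    { carrier := {x : H | ∃ m, x ∈ sym T ^ m}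
      one_mem' := ⟨0, by simp [pow_zero]⟩
      mul_mem' := by
        rintro x y ⟨m, hm⟩ ⟨k, hk⟩
        exact ⟨m + k, by rw [pow_add]; exact Set.mul_mem_mul hm hk⟩
      inv_mem' := by
        rintro x ⟨m, hm⟩
        refine ⟨m, ?_⟩
        rw [← pow_inv T m]
        exact Set.inv_mem_inv.2 hm }
  have : Subgroup.closure T ≤ W := Subgroup.closure_le W |>.2
    (fun x hx => ⟨1, by rw [pow_one]; exact subset_sym T hx⟩)
  exact this (hT ▸ Subgroup.mem_top h)


lemma mk_nil_eq_one {α : Type*} : (FreeGroup.mk ([] : List (α × Bool))) = 1 :=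
  (FreeGroup.one_eq_mk).symm

lemma inv_of_eq {α : Type*} (t : α) :
    (FreeGroup.of t)⁻¹ = FreeGroup.mk [(t, false)] := by
  show (FreeGroup.mk [(t, true)])⁻¹ = _
  rw [FreeGroup.inv_mk]
  simp [FreeGroup.invRev]

lemma exists_word_of_mem_pow {T : Set H} :
    ∀ {m : ℕ} {h : H}, h ∈ sym T ^ m →
      ∃ (w : FreeGroup T) (l : List (T × Bool)), FreeGroup.mk l = w ∧ l.length ≤ m ∧
        FreeGroup.lift (fun t : T => (t : H)) w = h := by
  intro m
  induction m with
  | zero =>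
    intro h hh
    rw [pow_zero, Set.mem_one] at hh
    exact ⟨1, [], mk_nil_eq_one, le_rfl, by rw [hh, map_one]⟩
  | succ m ih =>
    intro h hh
    rw [pow_succ] at hh
    obtain ⟨a, ha, d, hd, rfl⟩ := hh
    obtain ⟨w, l, hmk, hlen, hlift⟩ := ih ha
    rcases hd with (hd | hd) | hd
    · refine ⟨w * FreeGroup.of ⟨d, hd⟩, l ++ [(⟨d, hd⟩, true)], ?_, ?_, ?_⟩
      · rw [← FreeGroup.mul_mk, hmk]; rfl
      · simp only [List.length_append, List.length_cons, List.length_nil]; omega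
      · rw [map_mul, hlift, FreeGroup.lift_apply_of]
    · rw [Set.mem_inv] at hd
      refine ⟨w * (FreeGroup.of ⟨d⁻¹, hd⟩)⁻¹, l ++ [(⟨d⁻¹, hd⟩, false)], ?_, ?_, ?_⟩
      · rw [← FreeGroup.mul_mk, hmk, inv_of_eq]
      · simp only [List.length_append, List.length_cons, List.length_nil]; omega
      · rw [map_mul, hlift, map_inv, FreeGroup.lift_apply_of]
        simp
    · rw [Set.mem_singleton_iff] at hd
      exact ⟨w, l, hmk, le_trans hlen (Nat.le_succ m), by simp [hlift, hd]⟩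

/-- The canonical map from the free group on a subset to the group. -/
def gp (T : Set H) : FreeGroup T →* H := FreeGroup.lift (fun t : T => (t : H))

/-- Relators of length at most `n`. -/
def relSet (T : Set H) (n : ℕ) : Set (FreeGroup T) :=
  {x : FreeGroup T | x ∈ (gp T).ker ∧
    ∃ l : List (↥T × Bool), FreeGroup.mk l = x ∧ l.length ≤ n}

/-- `(T, n)` is a presentation of `H`. -/
def Pres (T : Set H) (n : ℕ) : Prop :=
  Subgroup.normalClosure (relSet T n) = (gp T).ker

lemma relSet_mono {T : Set H} {n n' : ℕ} (h : n ≤ n') : relSet T n ⊆ relSet T n' :=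
  fun x ⟨hk, l, hl, hlen⟩ => ⟨hk, l, hl, le_trans hlen h⟩

lemma gp_comp_map {T T' : Set H} (hsub : T ⊆ T') :
    (gp T').comp (FreeGroup.map (Set.inclusion hsub)) = gp T := by
  apply FreeGroup.ext_hom
  intro t
  simp [gp, FreeGroup.map.of, FreeGroup.lift_apply_of, Set.inclusion]

lemma map_mem_relSet {T T' : Set H} (hsub : T ⊆ T') {n n' : ℕ} (hn : n ≤ n')
    {x : FreeGroup T} (hx : x ∈ relSet T n) :
    FreeGroup.map (Set.inclusion hsub) x ∈ relSet T' n' := by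
  obtain ⟨hk, l, hl, hlen⟩ := hx
  refine ⟨?_, l.map (fun p => (Set.inclusion hsub p.1, p.2)), ?_, ?_⟩
  · rw [MonoidHom.mem_ker, ← MonoidHom.comp_apply, gp_comp_map hsub]
    exact hk
  · rw [← hl, FreeGroup.map.mk]
  · rw [List.length_map]; exact le_trans hlen hn

lemma pres_transfer {T T' : Set H} (hsub : T ⊆ T') {n m : ℕ} (hpres : Pres T n)
    (hexp : ∀ t' : T', ∃ (w : FreeGroup T) (l : List (↥T × Bool)),
      FreeGroup.mk l = w ∧ l.length ≤ m ∧ gp T w = ↑t') :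
    Pres T' (max n (m + 1)) := by
  set n' := max n (m + 1) with hn'
  set N' := Subgroup.normalClosure (relSet T' n') with hN'
  -- choose representing words
  choose r lr hlr hlen hrval using hexp
  set ι := FreeGroup.map (Set.inclusion hsub) with hι
  set ρ : FreeGroup T' →* FreeGroup T := FreeGroup.lift r with hρ
  have hφρ : (gp T).comp ρ = gp T' := by
    apply FreeGroup.ext_hom
    intro t'
    simp only [MonoidHom.comp_apply, hρ, FreeGroup.lift_apply_of]
    rw [hrval t']
    simp [gp, FreeGroup.lift_apply_of]
  have hstep1 : ∀ x ∈ (gp T).ker, ι x ∈ N' := by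
    intro x hx
    rw [← hpres] at hx
    have hnormal : (N'.comap ι).Normal := Subgroup.Normal.comap inferInstance ι
    refine Subgroup.normalClosure_le_normal (N := N'.comap ι) ?_ hx
    intro y hy
    exact Subgroup.subset_normalClosure (map_mem_relSet hsub (le_max_left _ _) hy)
  set q := QuotientGroup.mk' N' with hq
  have hstep2 : q.comp (ι.comp ρ) = q := by
    apply FreeGroup.ext_hom
    intro t'
    simp only [MonoidHom.comp_apply, hρ, FreeGroup.lift_apply_of]
    have hmem : (FreeGroup.of t')⁻¹ * ι (r t') ∈ N' := by
      refine Subgroup.subset_normalClosure ?_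
      refine ⟨?_, (t', false) :: (lr t').map (fun p => (Set.inclusion hsub p.1, p.2)), ?_, ?_⟩
      · rw [MonoidHom.mem_ker, map_mul, map_inv]
        rw [show (gp T') (ι (r t')) = gp T (r t') from by
          rw [hι, ← MonoidHom.comp_apply, gp_comp_map hsub]]
        rw [hrval t']
        simp [gp, FreeGroup.lift_apply_of]
      · show FreeGroup.mk ([(t', false)] ++ _) = _
        rw [← FreeGroup.mul_mk, ← inv_of_eq, hι, ← FreeGroup.map.mk, hlr]
      · simp only [List.length_cons, List.length_map]
        have := hlen t'
        omega
    have h1 : q ((FreeGroup.of t')⁻¹ * ι (r t')) = 1 := (QuotientGroup.eq_one_iff _).2 hmem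
    rw [map_mul, map_inv] at h1
    exact (inv_mul_eq_one.1 h1).symm
  apply le_antisymm
  · exact Subgroup.normalClosure_le_normal (fun x hx => hx.1)
  · intro x hx
    have h1 : ρ x ∈ (gp T).ker := by
      rw [MonoidHom.mem_ker, ← MonoidHom.comp_apply, hφρ]
      exact hx
    have h2 : ι (ρ x) ∈ N' := hstep1 _ h1
    have h3 : q x = 1 := by
      have := DFunLike.congr_fun hstep2 x
      simp only [MonoidHom.comp_apply] at this
      rw [← this]
      exact (QuotientGroup.eq_one_iff _).2 h2
    exact (QuotientGroup.eq_one_iff _).1 h3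

lemma pres_lift {T : Set H} {n : ℕ} (hgen : Subgroup.closure T = ⊤) (hpres : Pres T n)
    {Q : Type*} [Group Q] (g : T → Q)
    (hg : ∀ x ∈ relSet T n, FreeGroup.lift g x = 1) :
    ∃ ψ : H →* Q, ∀ t : T, ψ ↑t = g t := by
  have hsurj : Function.Surjective (gp T) := by
    rw [← MonoidHom.range_eq_top, gp, FreeGroup.range_lift_eq_closure, Subtype.range_coe]
    exact hgen
  have hker : (gp T).ker ≤ (FreeGroup.lift g).ker := by
    rw [← hpres]
    exact Subgroup.normalClosure_le_normal
      (fun x hx => MonoidHom.mem_ker.2 (hg x hx))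
  set e := QuotientGroup.quotientKerEquivOfSurjective (gp T) hsurj with he
  refine ⟨(QuotientGroup.lift ((gp T).ker) (FreeGroup.lift g) hker).comp
    e.symm.toMonoidHom, ?_⟩
  intro t
  have h1 : e (QuotientGroup.mk (FreeGroup.of t)) = ↑t := by
    simp only [he, QuotientGroup.quotientKerEquivOfSurjective,
      QuotientGroup.quotientKerEquivOfRightInverse_apply]
    rw [QuotientGroup.kerLift_mk]
    simp [gp, FreeGroup.lift_apply_of]
  have h2 : e.symm ↑t = QuotientGroup.mk (FreeGroup.of t) := by
    rw [MulEquiv.symm_apply_eq]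
    exact h1.symm
  simp only [MonoidHom.comp_apply, MulEquiv.toMonoidHom_eq_coe, MonoidHom.coe_coe, h2]
  rw [QuotientGroup.lift_mk']
  exact FreeGroup.lift_apply_of


section Topology

variable [TopologicalSpace H] [IsTopologicalGroup H] [T2Space H]

lemma isCompact_sym {T : Set H} (hTc : IsCompact T) : IsCompact (sym T) :=
  (hTc.union hTc.inv).union isCompact_singleton

lemma isCompact_pow {T : Set H} (hTc : IsCompact T) (m : ℕ) : IsCompact (sym T ^ m) := by
  induction m with
  | zero =>
    rw [pow_zero, show (1 : Set H) = {1} from Set.ext (fun a => Set.mem_one)]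
    exact isCompact_singleton
  | succ m ih => rw [pow_succ]; exact ih.mul (isCompact_sym hTc)

lemma compact_subgroup_subset_pow {T : Set H} (hTc : IsCompact T)
    (hTg : Subgroup.closure T = ⊤) {K : Subgroup H} (hK : IsCompact (K : Set H)) :
    ∃ M, (K : Set H) ⊆ sym T ^ M := by
  haveI : CompactSpace ((K : Set H) : Type _) := isCompact_iff_compactSpace.mp hK
  haveI : Nonempty ((K : Set H) : Type _) := ⟨⟨1, K.one_mem⟩⟩
  set f : ℕ → Set ((K : Set H) : Type _) := fun m => (Subtype.val) ⁻¹' (sym T ^ m) with hf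
  have hfc : ∀ m, IsClosed (f m) :=
    fun m => ((isCompact_pow hTc m).isClosed).preimage continuous_subtype_val
  have hfU : ⋃ m, f m = Set.univ := by
    ext x
    simp only [Set.mem_iUnion, Set.mem_univ, iff_true, hf, Set.mem_preimage]
    exact mem_iUnion_pow hTg ↑x
  obtain ⟨m₀, x₀, hx₀⟩ := nonempty_interior_of_iUnion_of_closed hfc hfU
  obtain ⟨O, hO, hOeq⟩ := isOpen_induced_iff.mp (isOpen_interior (s := f m₀))
  have hOsub : ∀ h : H, h ∈ O → h ∈ K → h ∈ sym T ^ m₀ := by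
    intro h hhO hhK
    have h1 : (⟨h, hhK⟩ : ((K : Set H) : Type _)) ∈ interior (f m₀) := by
      rw [← hOeq]; exact hhO
    have h2 : (⟨h, hhK⟩ : ((K : Set H) : Type _)) ∈ f m₀ := interior_subset h1
    exact h2
  have hx₀O : (x₀ : H) ∈ O := by rw [← hOeq] at hx₀; exact hx₀
  have hx₀pow : (x₀ : H) ∈ sym T ^ m₀ := by
    have h2 : x₀ ∈ f m₀ := interior_subset hx₀
    exact h2
  have hcover : (K : Set H) ⊆ ⋃ c : ((K : Set H) : Type _), ((c : H) * (x₀ : H)⁻¹) • O := by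
    intro k hk
    refine Set.mem_iUnion.2 ⟨⟨k, hk⟩, ?_⟩
    refine Set.mem_smul_set.2 ⟨(x₀ : H), hx₀O, ?_⟩
    simp only [smul_eq_mul]
    group
  obtain ⟨t, ht⟩ := hK.elim_finite_subcover
    (fun c : ((K : Set H) : Type _) => ((c : H) * (x₀ : H)⁻¹) • O)
    (fun c => hO.smul _) hcover
  have hmfun := fun c : ((K : Set H) : Type _) => mem_iUnion_pow hTg (c : H)
  choose mfun hmfun using hmfun
  refine ⟨(t.sup mfun) + m₀ + m₀, ?_⟩
  intro k hk
  obtain ⟨c, hct, hkc⟩ := Set.mem_iUnion₂.1 (ht hk)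
  obtain ⟨o, hoO, hok⟩ := Set.mem_smul_set.1 hkc
  simp only [smul_eq_mul] at hok
  have hoK : o ∈ K := by
    have ho : o = (x₀ : H) * (c : H)⁻¹ * k := by
      rw [← hok]; group
    rw [ho]
    exact K.mul_mem (K.mul_mem x₀.2 (K.inv_mem c.2)) hk
  have ho_pow : o ∈ sym T ^ m₀ := hOsub o hoO hoK
  have hx₀inv : (x₀ : H)⁻¹ ∈ sym T ^ m₀ := by
    rw [← pow_inv]; exact Set.inv_mem_inv.2 hx₀pow
  have hc_pow : (c : H) ∈ sym T ^ (t.sup mfun) := pow_mono (Finset.le_sup hct) (hmfun c)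
  have hkdecomp : k = (c : H) * (x₀ : H)⁻¹ * o := hok.symm
  rw [hkdecomp, pow_add, pow_add]
  exact Set.mul_mem_mul (Set.mul_mem_mul hc_pow hx₀inv) ho_pow

end Topology

end CPAux


/-- If a (Hausdorff) topological group `G` splits as an amalgamated free product of two
open subgroups `A` and `B` with compact intersection, and `A` and `B` are compactly
presented, then `G` is compactly presented. -/
theorem isCompactlyPresented_of_amalgamatedProduct
    {G : Type u} [Group G] [TopologicalSpace G] [IsTopologicalGroup G] [T2Space G]
    (A B : Subgroup G) (hAopen : IsOpen (A : Set G)) (hBopen : IsOpen (B : Set G))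
    (hCcompact : IsCompact ((A ⊓ B : Subgroup G) : Set G))
    (hsplit : IsAmalgamatedProduct A B)
    (hA : IsCompactlyPresentedGroup A) (hB : IsCompactlyPresentedGroup B) :
    IsCompactlyPresentedGroup G := by
  classical
  obtain ⟨SA, nA, hSAc, hSAgen, hSApres⟩ := hA
  obtain ⟨SB, nB, hSBc, hSBgen, hSBpres⟩ := hB
  have hSApres' : CPAux.Pres SA nA := hSApres
  have hSBpres' : CPAux.Pres SB nB := hSBpres
  -- the intersection, viewed inside `A` and inside `B`
  set CA : Subgroup ↥A := (A ⊓ B).subgroupOf A with hCAdef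
  set CB : Subgroup ↥B := (A ⊓ B).subgroupOf B with hCBdef
  haveI : CompactSpace ↥((A ⊓ B : Subgroup G) : Set G) := isCompact_iff_compactSpace.mp hCcompact
  have hCAc : IsCompact (CA : Set ↥A) := by
    have hcont : Continuous (fun c : ↥((A ⊓ B : Subgroup G) : Set G) =>
        (⟨(c : G), ((Subgroup.mem_inf).1 c.2).1⟩ : ↥A)) :=
      Continuous.subtype_mk continuous_subtype_val _
    have hrange := isCompact_range hcont
    have : Set.range (fun c : ↥((A ⊓ B : Subgroup G) : Set G) =>
        (⟨(c : G), ((Subgroup.mem_inf).1 c.2).1⟩ : ↥A)) = (CA : Set ↥A) := by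
      ext a
      constructor
      · rintro ⟨c, rfl⟩
        exact Subgroup.mem_subgroupOf.2 c.2
      · intro ha
        exact ⟨⟨(a : G), Subgroup.mem_subgroupOf.1 ha⟩, rfl⟩
    rwa [this] at hrange
  have hCBc : IsCompact (CB : Set ↥B) := by
    have hcont : Continuous (fun c : ↥((A ⊓ B : Subgroup G) : Set G) =>
        (⟨(c : G), ((Subgroup.mem_inf).1 c.2).2⟩ : ↥B)) :=
      Continuous.subtype_mk continuous_subtype_val _
    have hrange := isCompact_range hcont
    have : Set.range (fun c : ↥((A ⊓ B : Subgroup G) : Set G) =>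
        (⟨(c : G), ((Subgroup.mem_inf).1 c.2).2⟩ : ↥B)) = (CB : Set ↥B) := by
      ext b
      constructor
      · rintro ⟨c, rfl⟩
        exact Subgroup.mem_subgroupOf.2 c.2
      · intro hb
        exact ⟨⟨(b : G), Subgroup.mem_subgroupOf.1 hb⟩, rfl⟩
    rwa [this] at hrange
  -- enlarged generating sets
  set TA : Set ↥A := SA ∪ (CA : Set ↥A) with hTAdef
  set TB : Set ↥B := SB ∪ (CB : Set ↥B) with hTBdef
  have hTAc : IsCompact TA := hSAc.union hCAc
  have hTBc : IsCompact TB := hSBc.union hCBc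
  have hTAgen : Subgroup.closure TA = ⊤ := by
    rw [eq_top_iff, ← hSAgen]
    exact Subgroup.closure_mono Set.subset_union_left
  have hTBgen : Subgroup.closure TB = ⊤ := by
    rw [eq_top_iff, ← hSBgen]
    exact Subgroup.closure_mono Set.subset_union_left
  -- bounded expressibility of elements of the intersection
  obtain ⟨MA, hMA⟩ := CPAux.compact_subgroup_subset_pow hSAc hSAgen hCAc
  obtain ⟨MB, hMB⟩ := CPAux.compact_subgroup_subset_pow hSBc hSBgen hCBc
  have hexpA : ∀ t' : TA, ∃ (w : FreeGroup SA) (l : List (↥SA × Bool)),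
      FreeGroup.mk l = w ∧ l.length ≤ MA + 1 ∧ CPAux.gp SA w = ↑t' := by
    intro t'
    refine CPAux.exists_word_of_mem_pow ?_
    rcases t'.2 with h | h
    · exact CPAux.pow_mono (a := 1) (b := MA + 1) (by omega)
        (by rw [pow_one]; exact CPAux.subset_sym SA h)
    · exact CPAux.pow_mono (Nat.le_succ MA) (hMA h)
  have hexpB : ∀ t' : TB, ∃ (w : FreeGroup SB) (l : List (↥SB × Bool)),
      FreeGroup.mk l = w ∧ l.length ≤ MB + 1 ∧ CPAux.gp SB w = ↑t' := by
    intro t'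
    refine CPAux.exists_word_of_mem_pow ?_
    rcases t'.2 with h | h
    · exact CPAux.pow_mono (a := 1) (b := MB + 1) (by omega)
        (by rw [pow_one]; exact CPAux.subset_sym SB h)
    · exact CPAux.pow_mono (Nat.le_succ MB) (hMB h)
  set nA' : ℕ := max nA (MA + 1 + 1) with hnA'def
  set nB' : ℕ := max nB (MB + 1 + 1) with hnB'def
  have hTApres : CPAux.Pres TA nA' :=
    CPAux.pres_transfer Set.subset_union_left hSApres' hexpA
  have hTBpres : CPAux.Pres TB nB' :=
    CPAux.pres_transfer Set.subset_union_left hSBpres' hexpB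
  -- the compact generating set of `G`
  set S : Set G := (Subtype.val '' TA) ∪ (Subtype.val '' TB) with hSdef
  have hSc : IsCompact S :=
    (hTAc.image continuous_subtype_val).union (hTBc.image continuous_subtype_val)
  -- `G` is generated by `A` and `B`
  have hABtop : A ⊔ B = ⊤ := by
    rw [eq_top_iff]
    rintro g -
    obtain ⟨x, rfl⟩ := hsplit.2 g
    show amalgamCanonicalHom A B x ∈ A ⊔ B
    induction x using Monoid.PushoutI.induction_on with
    | of i a =>
      have h1 : amalgamCanonicalHom A B (Monoid.PushoutI.of i a) = amalgamProj A B i a :=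
        Monoid.PushoutI.lift_of _ _ _ _
      rw [h1]
      cases i with
      | true => exact (le_sup_left : A ≤ A ⊔ B) a.2
      | false => exact (le_sup_right : B ≤ A ⊔ B) a.2
    | base h =>
      have h1 : amalgamCanonicalHom A B (Monoid.PushoutI.base (amalgamMaps A B) h) =
          (A ⊓ B).subtype h := Monoid.PushoutI.lift_base _ _ _ _
      rw [h1]
      exact (le_sup_left : A ≤ A ⊔ B) ((inf_le_left : A ⊓ B ≤ A) h.2)
    | mul x y hx hy =>
      rw [map_mul]
      exact mul_mem hx hy
  have hSgen : Subgroup.closure S = ⊤ := by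
    rw [eq_top_iff, ← hABtop, sup_le_iff]
    constructor
    · intro a ha
      have h2 : (⟨a, ha⟩ : ↥A) ∈ Subgroup.closure TA := hTAgen ▸ Subgroup.mem_top _
      have h3 : ((⟨a, ha⟩ : ↥A) : G) ∈ Subgroup.closure S := by
        refine Subgroup.closure_induction (k := TA)
          (p := fun (x : ↥A) _ => (x : G) ∈ Subgroup.closure S) ?_ ?_ ?_ ?_ h2
        · intro x hx
          exact Subgroup.subset_closure (Or.inl ⟨x, hx, rfl⟩)
        · simpa using (Subgroup.closure S).one_mem
        · intro x y _ _ hx hy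
          rw [Subgroup.coe_mul]
          exact mul_mem hx hy
        · intro x _ hx
          rw [Subgroup.coe_inv]
          exact inv_mem hx
      exact h3
    · intro b hb
      have h2 : (⟨b, hb⟩ : ↥B) ∈ Subgroup.closure TB := hTBgen ▸ Subgroup.mem_top _
      have h3 : ((⟨b, hb⟩ : ↥B) : G) ∈ Subgroup.closure S := by
        refine Subgroup.closure_induction (k := TB)
          (p := fun (x : ↥B) _ => (x : G) ∈ Subgroup.closure S) ?_ ?_ ?_ ?_ h2
        · intro x hx
          exact Subgroup.subset_closure (Or.inr ⟨x, hx, rfl⟩)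
        · simpa using (Subgroup.closure S).one_mem
        · intro x y _ _ hx hy
          rw [Subgroup.coe_mul]
          exact mul_mem hx hy
        · intro x _ hx
          rw [Subgroup.coe_inv]
          exact inv_mem hx
      exact h3
  set n : ℕ := max nA' nB' with hndef
  set N : Subgroup (FreeGroup S) := Subgroup.normalClosure (CPAux.relSet S n) with hNdef
  -- letter inclusions
  have hjA : ∀ t : TA, ((t : ↥A) : G) ∈ S := fun t => Or.inl ⟨↑t, t.2, rfl⟩
  have hjB : ∀ t : TB, ((t : ↥B) : G) ∈ S := fun t => Or.inr ⟨↑t, t.2, rfl⟩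
  set jA : TA → S := fun t => ⟨((t : ↥A) : G), hjA t⟩ with hjAdef
  set jB : TB → S := fun t => ⟨((t : ↥B) : G), hjB t⟩ with hjBdef
  set gA : TA → FreeGroup S ⧸ N := fun t => QuotientGroup.mk (FreeGroup.of (jA t)) with hgAdef
  set gB : TB → FreeGroup S ⧸ N := fun t => QuotientGroup.mk (FreeGroup.of (jB t)) with hgBdef
  -- commuting squares for the letter maps
  have hcommA : (CPAux.gp S).comp (FreeGroup.map jA) = A.subtype.comp (CPAux.gp TA) := by
    apply FreeGroup.ext_hom
    intro t
    simp only [MonoidHom.comp_apply, FreeGroup.map.of]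
    rw [show CPAux.gp S (FreeGroup.of (jA t)) = ((jA t : G)) from FreeGroup.lift_apply_of,
      show CPAux.gp TA (FreeGroup.of t) = (t : ↥A) from FreeGroup.lift_apply_of]
    rfl
  have hcommB : (CPAux.gp S).comp (FreeGroup.map jB) = B.subtype.comp (CPAux.gp TB) := by
    apply FreeGroup.ext_hom
    intro t
    simp only [MonoidHom.comp_apply, FreeGroup.map.of]
    rw [show CPAux.gp S (FreeGroup.of (jB t)) = ((jB t : G)) from FreeGroup.lift_apply_of,
      show CPAux.gp TB (FreeGroup.of t) = (t : ↥B) from FreeGroup.lift_apply_of]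
    rfl
  have hliftA : FreeGroup.lift gA = (QuotientGroup.mk' N).comp (FreeGroup.map jA) := by
    apply FreeGroup.ext_hom
    intro t
    simp only [MonoidHom.comp_apply, FreeGroup.map.of, FreeGroup.lift_apply_of]
    rfl
  have hliftB : FreeGroup.lift gB = (QuotientGroup.mk' N).comp (FreeGroup.map jB) := by
    apply FreeGroup.ext_hom
    intro t
    simp only [MonoidHom.comp_apply, FreeGroup.map.of, FreeGroup.lift_apply_of]
    rfl
  -- short relators of `A`, `B` map into `N`
  have hrelA : ∀ x ∈ CPAux.relSet TA nA', FreeGroup.lift gA x = 1 := by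
    intro x hx
    rw [hliftA, MonoidHom.comp_apply]
    refine (QuotientGroup.eq_one_iff _).2 (Subgroup.subset_normalClosure ?_)
    obtain ⟨hk, l, hl, hlen⟩ := hx
    refine ⟨?_, l.map (fun p => (jA p.1, p.2)), ?_, ?_⟩
    · rw [MonoidHom.mem_ker, ← MonoidHom.comp_apply, hcommA, MonoidHom.comp_apply,
        MonoidHom.mem_ker.1 hk, map_one]
    · rw [← hl, FreeGroup.map.mk]
    · rw [List.length_map]
      exact le_trans hlen (le_max_left _ _)
  have hrelB : ∀ x ∈ CPAux.relSet TB nB', FreeGroup.lift gB x = 1 := by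
    intro x hx
    rw [hliftB, MonoidHom.comp_apply]
    refine (QuotientGroup.eq_one_iff _).2 (Subgroup.subset_normalClosure ?_)
    obtain ⟨hk, l, hl, hlen⟩ := hx
    refine ⟨?_, l.map (fun p => (jB p.1, p.2)), ?_, ?_⟩
    · rw [MonoidHom.mem_ker, ← MonoidHom.comp_apply, hcommB, MonoidHom.comp_apply,
        MonoidHom.mem_ker.1 hk, map_one]
    · rw [← hl, FreeGroup.map.mk]
    · rw [List.length_map]
      exact le_trans hlen (le_max_right _ _)
  -- the induced homomorphisms on `A` and `B`
  obtain ⟨αA, hαA⟩ := CPAux.pres_lift hTAgen hTApres gA hrelA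
  obtain ⟨αB, hαB⟩ := CPAux.pres_lift hTBgen hTBpres gB hrelB
  -- agreement on the intersection
  have hagree : ∀ c : ↥(A ⊓ B),
      αA (Subgroup.inclusion inf_le_left c) = αB (Subgroup.inclusion inf_le_right c) := by
    intro c
    have hcA : (Subgroup.inclusion (inf_le_left : A ⊓ B ≤ A) c) ∈ CA := by
      rw [Subgroup.mem_subgroupOf, Subgroup.coe_inclusion]
      exact c.2
    have hcB : (Subgroup.inclusion (inf_le_right : A ⊓ B ≤ B) c) ∈ CB := by
      rw [Subgroup.mem_subgroupOf, Subgroup.coe_inclusion]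
      exact c.2
    have h1 := hαA ⟨Subgroup.inclusion inf_le_left c, Or.inr hcA⟩
    have h2 := hαB ⟨Subgroup.inclusion inf_le_right c, Or.inr hcB⟩
    have h3 : jA ⟨Subgroup.inclusion inf_le_left c, Or.inr hcA⟩ =
        jB ⟨Subgroup.inclusion inf_le_right c, Or.inr hcB⟩ := by
      apply Subtype.ext
      show ((Subgroup.inclusion inf_le_left c : ↥A) : G) =
        ((Subgroup.inclusion inf_le_right c : ↥B) : G)
      rw [Subgroup.coe_inclusion, Subgroup.coe_inclusion]
    calc αA (Subgroup.inclusion inf_le_left c)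
        = gA ⟨Subgroup.inclusion inf_le_left c, Or.inr hcA⟩ := h1
      _ = gB ⟨Subgroup.inclusion inf_le_right c, Or.inr hcB⟩ := by
          rw [hgAdef, hgBdef]
          simp only []
          rw [h3]
      _ = αB (Subgroup.inclusion inf_le_right c) := h2.symm
  -- assemble the homomorphism out of the pushout
  set fam : ∀ b : Bool, amalgamFamily A B b →* FreeGroup S ⧸ N := fun b => match b with
    | true => αA
    | false => αB with hfamdef
  have hcompat : ∀ b : Bool, (fam b).comp (amalgamMaps A B b) =
      αA.comp (Subgroup.inclusion inf_le_left) := by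
    intro b
    cases b with
    | true => rfl
    | false =>
      apply MonoidHom.ext
      intro c
      exact (hagree c).symm
  set Φ : Monoid.PushoutI (amalgamMaps A B) →* FreeGroup S ⧸ N :=
    Monoid.PushoutI.lift fam (αA.comp (Subgroup.inclusion inf_le_left)) hcompat with hΦdef
  set e : Monoid.PushoutI (amalgamMaps A B) ≃* G :=
    MulEquiv.ofBijective (amalgamCanonicalHom A B) hsplit with hedef
  set ψ : G →* FreeGroup S ⧸ N := Φ.comp e.symm.toMonoidHom with hψdef
  have hψ : ∀ s : S, ψ ↑s = QuotientGroup.mk (FreeGroup.of s) := by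
    intro s
    rcases s.2 with ⟨t, ht, hts⟩ | ⟨t, ht, hts⟩
    · have he : e (Monoid.PushoutI.of (φ := amalgamMaps A B) true t) = ↑s := by
        show amalgamCanonicalHom A B (Monoid.PushoutI.of true t) = ↑s
        rw [show amalgamCanonicalHom A B (Monoid.PushoutI.of true t) =
          amalgamProj A B true t from Monoid.PushoutI.lift_of _ _ _ _]
        exact hts
      have hsymm : e.symm ↑s = Monoid.PushoutI.of (φ := amalgamMaps A B) true t := by
        rw [MulEquiv.symm_apply_eq]
        exact he.symm
      have hΦof : Φ (Monoid.PushoutI.of (φ := amalgamMaps A B) true t) = αA t :=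
        Monoid.PushoutI.lift_of _ _ _ _
      have hval : αA t = gA ⟨t, ht⟩ := hαA ⟨t, ht⟩
      have hjAs : jA ⟨t, ht⟩ = s := Subtype.ext hts
      calc ψ ↑s = Φ (e.symm ↑s) := rfl
        _ = αA t := by rw [hsymm, hΦof]
        _ = QuotientGroup.mk (FreeGroup.of (jA ⟨t, ht⟩)) := hval
        _ = QuotientGroup.mk (FreeGroup.of s) := by rw [hjAs]
    · have he : e (Monoid.PushoutI.of (φ := amalgamMaps A B) false t) = ↑s := by
        show amalgamCanonicalHom A B (Monoid.PushoutI.of false t) = ↑s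
        rw [show amalgamCanonicalHom A B (Monoid.PushoutI.of false t) =
          amalgamProj A B false t from Monoid.PushoutI.lift_of _ _ _ _]
        exact hts
      have hsymm : e.symm ↑s = Monoid.PushoutI.of (φ := amalgamMaps A B) false t := by
        rw [MulEquiv.symm_apply_eq]
        exact he.symm
      have hΦof : Φ (Monoid.PushoutI.of (φ := amalgamMaps A B) false t) = αB t :=
        Monoid.PushoutI.lift_of _ _ _ _
      have hval : αB t = gB ⟨t, ht⟩ := hαB ⟨t, ht⟩
      have hjBs : jB ⟨t, ht⟩ = s := Subtype.ext hts
      calc ψ ↑s = Φ (e.symm ↑s) := rfl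
        _ = αB t := by rw [hsymm, hΦof]
        _ = QuotientGroup.mk (FreeGroup.of (jB ⟨t, ht⟩)) := hval
        _ = QuotientGroup.mk (FreeGroup.of s) := by rw [hjBs]
  -- conclusion
  refine ⟨S, n, hSc, hSgen, ?_⟩
  apply le_antisymm
  · exact Subgroup.normalClosure_le_normal (fun x hx => hx.1)
  · intro x hx
    have hhom : (QuotientGroup.mk' N) = ψ.comp (CPAux.gp S) := by
      apply FreeGroup.ext_hom
      intro s
      simp only [MonoidHom.comp_apply]
      rw [show CPAux.gp S (FreeGroup.of s) = (s : G) from FreeGroup.lift_apply_of, hψ s]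
      rfl
    have h1 : QuotientGroup.mk' N x = 1 := by
      rw [hhom, MonoidHom.comp_apply, show CPAux.gp S x = 1 from hx, map_one]
    exact (QuotientGroup.eq_one_iff _).1 h1
end
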